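/- Let n ≥ 2 and m ≥ 2 be integers and fix indices 1 ≤ i < j ≤ m. Then there is a unique additive group homomorphism π_{i,j} from J(2^n, R_m) (the subring of R_m = ℤ[x_1, ..., x_m] generated by all 2^n-th powers, viewed as an additive group) to ℤ/2ℤ such that for every f ∈ R_m, π_{i,j}(f^{2^n}) equals the residue mod 2 of the integer c_{f^{2^n}}(x_i x_j)/2^n + c_{f^{2^n}}(x_i^{2^{n−1}} x_j^{2^{n−1}})/2. -/

import Mathlib

open MvPolynomial

namespace Stmt10Aux

variable {σ : Type*} [DecidableEq σ]

omit [DecidableEq σ] in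
lemma expand_monomial_smul {R : Type*} [CommSemiring R] {p : ℕ} (hp : p ≠ 0)
    (s : σ →₀ ℕ) (a : R) :
    expand p (monomial s a) = monomial (p • s) a := by
  rw [monomial_eq, monomial_eq, map_mul, expand_C, Finsupp.prod, Finsupp.prod, map_prod]
  simp only [map_pow, expand_X, ← pow_mul]
  congr 1
  rw [Finsupp.support_smul_eq hp]
  refine Finset.prod_congr rfl fun k _ => ?_
  rw [Finsupp.smul_apply, smul_eq_mul]

lemma coeff_expand_smul {R : Type*} [CommSemiring R] {p : ℕ} (hp : p ≠ 0)
    (d : σ →₀ ℕ) (f : MvPolynomial σ R) :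
    MvPolynomial.coeff (p • d) (expand p f) = MvPolynomial.coeff d f := by
  induction f using MvPolynomial.induction_on' with
  | add g h hg hh => simp [map_add, hg, hh]
  | monomial s a =>
      rw [expand_monomial_smul hp, coeff_monomial, coeff_monomial]
      by_cases h : s = d
      · subst h; simp
      · rw [if_neg h, if_neg]
        intro hc
        apply h
        ext k
        have := DFunLike.congr_fun hc k
        simp only [Finsupp.smul_apply, smul_eq_mul] at this
        exact Nat.eq_of_mul_eq_mul_left (Nat.pos_of_ne_zero hp) this

lemma coeff_expand_eq_zero {R : Type*} [CommSemiring R] {p : ℕ} (hp : p ≠ 0) {d : σ →₀ ℕ}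
    (hd : ¬ ∀ k, p ∣ d k) (f : MvPolynomial σ R) :
    MvPolynomial.coeff d (expand p f) = 0 := by
  induction f using MvPolynomial.induction_on' with
  | add g h hg hh => simp [map_add, hg, hh]
  | monomial s a =>
      rw [expand_monomial_smul hp, coeff_monomial, if_neg]
      rintro rfl
      exact hd fun k => ⟨s k, by simp [mul_comm]⟩

lemma coeff_pow_two_pow_zmod {i j : σ} (hij : i ≠ j) (k : ℕ) (hk : 1 ≤ k)
    (g : MvPolynomial σ (ZMod 2)) :
    MvPolynomial.coeff (Finsupp.single i (2 ^ (k - 1)) + Finsupp.single j (2 ^ (k - 1)))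
      (g ^ 2 ^ k) = 0 := by
  induction k with
  | zero => omega
  | succ k ih =>
      rcases Nat.eq_or_lt_of_le hk with h1 | h2
      · have hk0 : k = 0 := by omega
        subst hk0
        rw [show (0:ℕ)+1-1 = 0 from rfl, pow_zero, show (2:ℕ)^(0+1) = 2 from rfl, ← expand_zmod]
        refine coeff_expand_eq_zero (by norm_num) ?_ g
        intro h
        have := h i
        simp [Finsupp.single_apply, hij.symm] at this
      · have hk1 : 1 ≤ k := by omega
        have hgg : g ^ 2 ^ (k + 1) = (g ^ 2 ^ k) ^ 2 := by
          rw [← pow_mul, pow_succ]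
        rw [hgg, ← expand_zmod]
        have hd : (Finsupp.single i (2 ^ (k + 1 - 1)) + Finsupp.single j (2 ^ (k + 1 - 1))) =
            (2 : ℕ) • (Finsupp.single i (2 ^ (k - 1)) + Finsupp.single j (2 ^ (k - 1))) := by
          ext l
          simp only [Finsupp.coe_add, Pi.add_apply, Finsupp.smul_apply, smul_eq_mul,
            Finsupp.single_apply]
          have h2p : 2 ^ (k + 1 - 1) = 2 * 2 ^ (k - 1) := by
            rw [Nat.succ_sub_one, ← pow_succ']
            congr 1
            omega
          split <;> split <;> omega
        rw [hd, coeff_expand_smul (by norm_num)]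
        exact ih hk1

lemma coeff_pderiv_single {i j : σ} (hij : i ≠ j)
    (g : MvPolynomial σ ℤ) :
    MvPolynomial.coeff (Finsupp.single i 1 + Finsupp.single j 1) g =
      MvPolynomial.coeff (Finsupp.single j 1) (MvPolynomial.pderiv i g) := by
  induction g using MvPolynomial.induction_on' with
  | add p q hp hq => simp [map_add, MvPolynomial.coeff_add, hp, hq]
  | monomial s a =>
      rw [pderiv_monomial, coeff_monomial, coeff_monomial]
      by_cases hs : s = Finsupp.single i 1 + Finsupp.single j 1
      · subst hs
        have h1 : (Finsupp.single i 1 + Finsupp.single j 1 : σ →₀ ℕ) i = 1 := by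
          simp [Finsupp.single_apply, hij.symm]
        have h2 : (Finsupp.single i 1 + Finsupp.single j 1 : σ →₀ ℕ) - Finsupp.single i 1 =
            Finsupp.single j 1 := by
          ext k; simp [Finsupp.single_apply]
        rw [if_pos rfl] at *
        rw [if_pos h2, h1]
        simp
      · rw [if_neg hs]
        by_cases h0 : s i = 0
        · split <;> simp [h0]
        · have : s - Finsupp.single i 1 ≠ Finsupp.single j 1 := by
            intro h
            apply hs
            have hle : Finsupp.single i 1 ≤ s := by
              rw [Finsupp.single_le_iff]; omega
            have := tsub_add_cancel_of_le hle
            rw [h] at this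
            rw [← this, add_comm]
          rw [if_neg this]

lemma dvd_coeff_pow {i j : σ} (hij : i ≠ j) (N : ℕ)
    (f : MvPolynomial σ ℤ) :
    (N : ℤ) ∣ MvPolynomial.coeff (Finsupp.single i 1 + Finsupp.single j 1) (f ^ N) := by
  rw [coeff_pderiv_single hij, pderiv_pow, mul_assoc]
  have hC : ((N : MvPolynomial σ ℤ)) = C (N : ℤ) := by
    simp
  rw [hC, coeff_C_mul]
  exact Dvd.intro _ rfl

lemma two_dvd_coeff_pow {i j : σ} (hij : i ≠ j) {n : ℕ} (hn : 1 ≤ n)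
    (f : MvPolynomial σ ℤ) :
    (2 : ℤ) ∣ MvPolynomial.coeff
      (Finsupp.single i (2 ^ (n - 1)) + Finsupp.single j (2 ^ (n - 1))) (f ^ 2 ^ n) := by
  have h := coeff_pow_two_pow_zmod hij n hn (MvPolynomial.map (Int.castRingHom (ZMod 2)) f)
  rw [← map_pow, MvPolynomial.coeff_map] at h
  have := (ZMod.intCast_zmod_eq_zero_iff_dvd _ 2).1 (by exact_mod_cast h)
  exact_mod_cast this

end Stmt10Aux

/-- There is a unique additive group homomorphism `π_{i,j}` from the subring of
`ℤ[x₁,…,xₘ]` generated by all `2^n`-th powers to `ℤ/2ℤ` sending each generator `f^(2^n)`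
to the residue mod 2 of `c_{f^{2^n}}(x_i x_j)/2^n + c_{f^{2^n}}(x_i^{2^{n-1}} x_j^{2^{n-1}})/2`. -/
theorem stmt_10 (n m : ℕ) (hn : 2 ≤ n) (hm : 2 ≤ m) (i j : Fin m) (hij : i < j) :
    ∃! π : (Subring.closure
        (Set.range fun g : MvPolynomial (Fin m) ℤ => g ^ (2 ^ n))) →+ ZMod 2,
      ∀ f : MvPolynomial (Fin m) ℤ,
        π ⟨f ^ 2 ^ n, Subring.subset_closure ⟨f, rfl⟩⟩ =
          ((MvPolynomial.coeff (Finsupp.single i 1 + Finsupp.single j 1) (f ^ 2 ^ n) / 2 ^ n +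
              MvPolynomial.coeff
                (Finsupp.single i (2 ^ (n - 1)) + Finsupp.single j (2 ^ (n - 1)))
                (f ^ 2 ^ n) / 2 : ℤ) : ZMod 2) := by
  classical
  set S : Set (MvPolynomial (Fin m) ℤ) := Set.range fun g : MvPolynomial (Fin m) ℤ => g ^ (2 ^ n)
    with hS
  set d1 : (Fin m) →₀ ℕ := Finsupp.single i 1 + Finsupp.single j 1 with hd1
  set d2 : (Fin m) →₀ ℕ := Finsupp.single i (2 ^ (n - 1)) + Finsupp.single j (2 ^ (n - 1))
    with hd2
  have hijne : i ≠ j := hij.ne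
  -- S is a submonoid
  let M : Submonoid (MvPolynomial (Fin m) ℤ) :=
    { carrier := S
      mul_mem' := by
        rintro a b ⟨f, rfl⟩ ⟨g, rfl⟩
        exact ⟨f * g, (mul_pow f g (2 ^ n))⟩
      one_mem' := ⟨1, one_pow _⟩ }
  have hsub : ∀ x, x ∈ Subring.closure S → x ∈ AddSubgroup.closure S := by
    intro x hx
    rw [Subring.mem_closure_iff] at hx
    rwa [show Submonoid.closure S = M from Submonoid.closure_eq M] at hx
  -- key divisibility
  have key : ∀ x ∈ AddSubgroup.closure S,
      (2 ^ n : ℤ) ∣ MvPolynomial.coeff d1 x ∧ (2 : ℤ) ∣ MvPolynomial.coeff d2 x := by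
    intro x hx
    induction hx using AddSubgroup.closure_induction with
    | mem x hxS =>
        obtain ⟨f, rfl⟩ := hxS
        constructor
        · have := Stmt10Aux.dvd_coeff_pow hijne (2 ^ n) f
          rw [hd1]
          exact_mod_cast this
        · exact Stmt10Aux.two_dvd_coeff_pow hijne (by omega) f
    | zero => simp
    | add x y hx hy ihx ihy =>
        rw [MvPolynomial.coeff_add, MvPolynomial.coeff_add]
        exact ⟨dvd_add ihx.1 ihy.1, dvd_add ihx.2 ihy.2⟩
    | neg x hx ihx =>
        rw [MvPolynomial.coeff_neg, MvPolynomial.coeff_neg]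
        exact ⟨ihx.1.neg_right, ihx.2.neg_right⟩
  have hpow_ne : (2 ^ n : ℤ) ≠ 0 := by positivity
  have htwo_ne : (2 : ℤ) ≠ 0 := by norm_num
  -- the underlying function
  set vl : (Subring.closure S) → ZMod 2 := fun x =>
    ((MvPolynomial.coeff d1 (x : MvPolynomial (Fin m) ℤ) / 2 ^ n +
      MvPolynomial.coeff d2 (x : MvPolynomial (Fin m) ℤ) / 2 : ℤ) : ZMod 2) with hvl
  have hadd : ∀ x y : (Subring.closure S), vl (x + y) = vl x + vl y := by
    intro x y
    obtain ⟨a, ha⟩ := (key _ (hsub _ x.2)).1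
    obtain ⟨b, hb⟩ := (key _ (hsub _ x.2)).2
    obtain ⟨a', ha'⟩ := (key _ (hsub _ y.2)).1
    obtain ⟨b', hb'⟩ := (key _ (hsub _ y.2)).2
    have hco : ((x + y : Subring.closure S) : MvPolynomial (Fin m) ℤ) =
        (x : MvPolynomial (Fin m) ℤ) + y := rfl
    rw [hvl]
    simp only [hco, MvPolynomial.coeff_add, ha, hb, ha', hb']
    rw [← mul_add, ← mul_add, Int.mul_ediv_cancel_left _ hpow_ne,
      Int.mul_ediv_cancel_left _ hpow_ne, Int.mul_ediv_cancel_left _ hpow_ne,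
      Int.mul_ediv_cancel_left _ htwo_ne, Int.mul_ediv_cancel_left _ htwo_ne,
      Int.mul_ediv_cancel_left _ htwo_ne]
    push_cast
    ring
  refine ⟨AddMonoidHom.mk' vl hadd, fun f => rfl, ?_⟩
  intro π' hπ'
  ext x
  obtain ⟨x, hx⟩ := x
  have hxadd := hsub x hx
  have hle : AddSubgroup.closure S ≤ (Subring.closure S).toAddSubgroup :=
    (AddSubgroup.closure_le _).2 Subring.subset_closure
  revert hx
  induction hxadd using AddSubgroup.closure_induction with
  | mem x hxS =>
      intro hx
      obtain ⟨f, rfl⟩ := hxS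
      rw [show (⟨f ^ 2 ^ n, hx⟩ : Subring.closure S) =
        ⟨f ^ 2 ^ n, Subring.subset_closure ⟨f, rfl⟩⟩ from rfl]
      rw [hπ' f]
      rfl
  | zero =>
      intro hx
      rw [show (⟨0, hx⟩ : Subring.closure S) = 0 from rfl]
      rw [map_zero, map_zero]
  | add x y hxc hyc ihx ihy =>
      intro hxy
      have hx' : x ∈ Subring.closure S := hle hxc
      have hy' : y ∈ Subring.closure S := hle hyc
      rw [show (⟨x + y, hxy⟩ : Subring.closure S) = ⟨x, hx'⟩ + ⟨y, hy'⟩ from rfl]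
      rw [map_add, map_add, ihx hx', ihy hy']
  | neg x hxc ihx =>
      intro hnx
      have hx' : x ∈ Subring.closure S := hle hxc
      rw [show (⟨-x, hnx⟩ : Subring.closure S) = -⟨x, hx'⟩ from rfl]
      rw [map_neg, map_neg, ihx hx']
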